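/- arXiv:2511.17772 — 3 statements merged into one kernel-verified Lean document; each statement's English description precedes it below -/
import Mathlib

section
/- Let (X, 𝒜, μ) be a probability space, f : X → X measure-preserving and ergodic, g ∈ L¹(μ), and w : [0,1] → ℝ continuous, nonnegative, with ∫₀¹ w = 1 and w not identically zero. Then for μ-almost every x, the weighted Birkhoff average WB_N(g)(x) = (1/α_N) ∑_{n=0}^{N-1} w(n/N) g(fⁿ(x)) converges to ∫ g dμ as N → ∞, where α_N = ∑_{n=0}^{N-1} w(n/N). -/
open Filter MeasureTheory Finset

section WBauxDet

lemma WBaux.riemann_sum_tendsto {w : ℝ → ℝ} (hw : ContinuousOn w (Set.Icc 0 1)) :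
    Tendsto (fun N : ℕ => (∑ n ∈ Finset.range N, w (n / N)) / N) atTop
      (nhds (∫ x in (0:ℝ)..1, w x)) := by
  rw [Metric.tendsto_atTop]
  intro ε hε
  obtain ⟨δ, hδ, hmod⟩ := Metric.uniformContinuousOn_iff.1
    (isCompact_Icc.uniformContinuousOn_of_continuous hw) (ε/2) (by linarith)
  obtain ⟨N₀, hN₀⟩ := exists_nat_gt (1/δ)
  refine ⟨N₀ + 1, fun N hN => ?_⟩
  have hN1 : 1 ≤ N := le_trans (Nat.le_add_left 1 N₀) hN
  have hNpos : (0:ℝ) < N := by exact_mod_cast hN1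
  have h1δN : (1:ℝ)/δ < N := lt_of_lt_of_le hN₀ (by exact_mod_cast hN.trans' (Nat.le_succ N₀))
  have hinv : 1 / (N:ℝ) < δ := by
    rw [div_lt_iff₀ hNpos]
    have := (div_lt_iff₀ hδ).1 h1δN
    nlinarith
  have hsub : ∀ n : ℕ, n < N → Set.Icc ((n:ℝ)/N) ((n+1:ℝ)/N) ⊆ Set.Icc (0:ℝ) 1 := by
    intro n hn
    apply Set.Icc_subset_Icc
    · positivity
    · rw [div_le_one hNpos]
      have : (n:ℝ) + 1 ≤ N := by exact_mod_cast hn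
      linarith
  have hii : ∀ k : ℕ, k < N →
      IntervalIntegrable w MeasureTheory.volume ((k:ℝ)/N) (((k:ℕ)+1:ℝ)/N) := by
    intro k hk
    apply ContinuousOn.intervalIntegrable
    rw [Set.uIcc_of_le (by apply div_le_div_of_nonneg_right ?_ hNpos.le; linarith)]
    exact hw.mono (hsub k hk)
  have key : ∫ x in (0:ℝ)..1, w x = ∑ k ∈ range N, ∫ x in ((k:ℝ)/N)..((k+1:ℝ)/N), w x := by
    have := intervalIntegral.sum_integral_adjacent_intervals
      (a := fun k : ℕ => (k:ℝ)/N) (n := N) (f := w) (μ := MeasureTheory.volume)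
      (by intro k hk; exact_mod_cast hii k hk)
    push_cast at this
    rw [zero_div, div_self hNpos.ne'] at this
    exact this.symm
  have piece : ∀ n : ℕ, n < N →
      |w ((n:ℝ)/N) / N - ∫ x in ((n:ℝ)/N)..((n+1:ℝ)/N), w x| ≤ ε/2 * (1/N) := by
    intro n hn
    have hle : (n:ℝ)/N ≤ (n+1:ℝ)/N := by apply div_le_div_of_nonneg_right ?_ hNpos.le; linarith
    have hconst : ∫ x in ((n:ℝ)/N)..((n+1:ℝ)/N), w ((n:ℝ)/N) =
        ((n+1:ℝ)/N - (n:ℝ)/N) * w ((n:ℝ)/N) := by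
      rw [intervalIntegral.integral_const]; simp [smul_eq_mul]
    have hgap : (n+1:ℝ)/N - (n:ℝ)/N = 1/N := by field_simp; ring
    have hsubint : ∫ x in ((n:ℝ)/N)..((n+1:ℝ)/N), (w x - w ((n:ℝ)/N)) =
        (∫ x in ((n:ℝ)/N)..((n+1:ℝ)/N), w x) - 1/N * w ((n:ℝ)/N) := by
      rw [intervalIntegral.integral_sub (hii n hn) (intervalIntegrable_const)]
      rw [intervalIntegral.integral_const]
      rw [smul_eq_mul, hgap]
    have hbound : ‖∫ x in ((n:ℝ)/N)..((n+1:ℝ)/N), (w x - w ((n:ℝ)/N))‖ ≤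
        ε/2 * |(n+1:ℝ)/N - (n:ℝ)/N| := by
      apply intervalIntegral.norm_integral_le_of_norm_le_const
      intro x hx
      rw [Set.uIoc_of_le hle] at hx
      have hxI : x ∈ Set.Icc (0:ℝ) 1 := hsub n hn ⟨hx.1.le, hx.2⟩
      have hnI : (n:ℝ)/N ∈ Set.Icc (0:ℝ) 1 := hsub n hn ⟨le_refl _, hle⟩
      have hd : dist x ((n:ℝ)/N) < δ := by
        rw [Real.dist_eq, abs_of_nonneg (by linarith [hx.1.le])]
        have : x - (n:ℝ)/N ≤ 1/N := by
          have := hx.2; rw [← hgap]; linarith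
        linarith
      exact (hmod x hxI ((n:ℝ)/N) hnI hd).le
    rw [hgap] at hbound
    rw [abs_sub_comm]
    calc |(∫ x in ((n:ℝ)/N)..((n+1:ℝ)/N), w x) - w ((n:ℝ)/N) / N|
        = ‖∫ x in ((n:ℝ)/N)..((n+1:ℝ)/N), (w x - w ((n:ℝ)/N))‖ := by
          rw [hsubint, Real.norm_eq_abs]; ring_nf
      _ ≤ ε/2 * |1/(N:ℝ)| := hbound
      _ = ε/2 * (1/N) := by rw [abs_of_pos (by positivity)]
  rw [Real.dist_eq, key, Finset.sum_div, ← Finset.sum_sub_distrib]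
  calc |∑ n ∈ range N, (w ((n:ℝ)/N) / N - ∫ x in ((n:ℝ)/N)..((n+1:ℝ)/N), w x)|
      ≤ ∑ n ∈ range N, |w ((n:ℝ)/N) / N - ∫ x in ((n:ℝ)/N)..((n+1:ℝ)/N), w x| :=
        Finset.abs_sum_le_sum_abs _ _
    _ ≤ ∑ _n ∈ range N, ε/2 * (1/N) := Finset.sum_le_sum (fun n hn => piece n (mem_range.1 hn))
    _ = N * (ε/2 * (1/N)) := by rw [Finset.sum_const, card_range, nsmul_eq_mul]
    _ = ε/2 := by field_simp
    _ < ε := by linarith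


lemma WBaux.abel_id (m : ℕ) (F : ℕ → ℝ) :
    ((m:ℝ)+1) * F 0 + ∑ j ∈ Finset.range m, (F (j+1) - F j) * ((m:ℝ) - j)
      = ∑ j ∈ Finset.range (m+1), F j := by
  induction m with
  | zero => simp
  | succ m ih =>
    have htel : ∑ j ∈ Finset.range (m+1), (F (j+1) - F j) = F (m+1) - F 0 :=
      Finset.sum_range_sub F (m+1)
    have hsplit : ∑ j ∈ Finset.range (m+1), (F (j+1) - F j) * (((m:ℝ)+1) - j)
        = ∑ j ∈ Finset.range (m+1), (F (j+1) - F j) * ((m:ℝ) - j)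
          + ∑ j ∈ Finset.range (m+1), (F (j+1) - F j) := by
      rw [← Finset.sum_add_distrib]
      exact Finset.sum_congr rfl fun j _ => by ring
    have hlast : ∑ j ∈ Finset.range (m+1), (F (j+1) - F j) * ((m:ℝ) - j)
        = ∑ j ∈ Finset.range m, (F (j+1) - F j) * ((m:ℝ) - j) := by
      rw [Finset.sum_range_succ]
      simp
    rw [Finset.sum_range_succ (f := F) (n := m+1), ← ih]
    push_cast
    rw [hsplit, hlast, htel]
    push_cast
    ring

lemma WBaux.tendsto_partial (a : ℕ → ℝ) {L : ℝ}
    (hL : Tendsto (fun N : ℕ => (∑ n ∈ Finset.range N, a n)/N) atTop (nhds L))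
    (c : ℕ → ℕ) {θ : ℝ} (hθ0 : 0 ≤ θ)
    (hc : Tendsto (fun N : ℕ => (c N : ℝ)/N) atTop (nhds θ)) :
    Tendsto (fun N : ℕ => (∑ n ∈ Finset.range (c N), a n)/N) atTop (nhds (θ * L)) := by
  set A : ℕ → ℝ := fun m => (∑ n ∈ Finset.range m, a n)/m with hA
  have hid : ∀ N : ℕ, (∑ n ∈ Finset.range (c N), a n)/(N:ℝ) = A (c N) * ((c N : ℝ)/N) := by
    intro N
    by_cases h : c N = 0
    · simp [A, h]
    · have hc0 : ((c N : ℕ):ℝ) ≠ 0 := Nat.cast_ne_zero.2 h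
      rw [hA]
      field_simp
  rcases eq_or_lt_of_le hθ0 with hθ | hθ
  · -- θ = 0 case
    rw [← hθ, zero_mul]
    obtain ⟨C, hC⟩ := (hL.abs).bddAbove_range
    have hCub : ∀ m, |A m| ≤ C := fun m => hC (Set.mem_range_self m)
    have hg : Tendsto (fun N : ℕ => C * ((c N : ℝ)/N)) atTop (nhds 0) := by
      rw [← hθ] at hc
      simpa using hc.const_mul C
    refine squeeze_zero_norm ?_ hg |>.congr (fun N => (hid N).symm)
    intro N
    rw [Real.norm_eq_abs, abs_mul, abs_of_nonneg (show (0:ℝ) ≤ (c N:ℝ)/N by positivity)]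
    exact mul_le_mul_of_nonneg_right (hCub _) (by positivity)
  · -- θ > 0 case
    have h1 : ∀ᶠ N : ℕ in atTop, θ/2 < (c N:ℝ)/N := hc.eventually (eventually_gt_nhds (by linarith))
    have hctop : Tendsto c atTop atTop := by
      rw [tendsto_atTop]
      intro b
      have h3 : Tendsto (fun N : ℕ => θ/2 * (N:ℝ)) atTop atTop :=
        Tendsto.const_mul_atTop (by linarith) tendsto_natCast_atTop_atTop
      filter_upwards [h1, h3.eventually_ge_atTop (b:ℝ), eventually_ge_atTop 1] with N hN1 hN2 hN3
      have hNpos : (0:ℝ) < N := by exact_mod_cast hN3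
      have hlt : θ/2 * N < c N := (lt_div_iff₀ hNpos).1 hN1
      exact_mod_cast hN2.trans hlt.le
    have hA : Tendsto (fun N => A (c N)) atTop (nhds L) := hL.comp hctop
    rw [mul_comm θ L] at *
    exact ((hA.mul hc).congr (fun N => (hid N).symm))


-- ==== nat helpers ====

lemma WBaux.lt_div_succ_mul (a b : ℕ) (hb : 0 < b) : a < (a/b + 1) * b := by
  have h1 := Nat.div_add_mod a b
  have h2 := Nat.mod_lt a hb
  rw [add_mul, one_mul, mul_comm]
  generalize hx : b * (a/b) = t at h1 ⊢
  generalize hr : a % b = r at h1 h2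
  omega

lemma WBaux.ceil_le_iff {k : ℕ} (hk : 1 ≤ k) (A n : ℕ) : (A + k - 1)/k ≤ n ↔ A ≤ n * k := by
  rw [Nat.div_le_iff_le_mul_add_pred (show 0 < k by omega), mul_comm k n]
  generalize n * k = t
  omega

lemma WBaux.ceil_lower {k : ℕ} (hk : 1 ≤ k) (A : ℕ) (hA : 1 ≤ A) : A ≤ ((A + k - 1)/k) * k := by
  have h := WBaux.lt_div_succ_mul (A + k - 1) k (by omega)
  rw [add_mul, one_mul] at h
  generalize hx : (A + k - 1)/k * k = t at h ⊢
  omega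

lemma WBaux.ceil_upper {k : ℕ} (hk : 1 ≤ k) (A : ℕ) : ((A + k - 1)/k) * k ≤ A + k := by
  exact le_trans (Nat.div_mul_le_self _ _) (by omega)

-- ==== main deterministic lemma ====

lemma WBaux.weighted_cesaro (a : ℕ → ℝ) {L M : ℝ}
    (hL : Tendsto (fun N : ℕ => (∑ n ∈ Finset.range N, a n)/N) atTop (nhds L))
    (hM : Tendsto (fun N : ℕ => (∑ n ∈ Finset.range N, |a n|)/N) atTop (nhds M))
    {w : ℝ → ℝ} (hw : ContinuousOn w (Set.Icc 0 1)) :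
    Tendsto (fun N : ℕ => (∑ n ∈ Finset.range N, w (n/N) * a n)/N) atTop
      (nhds (L * ∫ x in (0:ℝ)..1, w x)) := by
  set I := ∫ x in (0:ℝ)..1, w x with hI
  set T : ℕ → ℝ := fun N => (∑ n ∈ Finset.range N, w (n/N) * a n)/N with hT
  rw [Metric.tendsto_nhds]
  intro ε hε
  have hM0 : 0 ≤ M := ge_of_tendsto' hM (fun N => by positivity)
  set B := |L| + M + 1 with hB
  have hB1 : 1 ≤ B := by have := abs_nonneg L; simp only [hB]; linarith
  have hBpos : 0 < B := by linarith
  set ε' := ε/(3*B) with hε'def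
  have hε' : 0 < ε' := by apply div_pos hε; linarith
  obtain ⟨δ, hδ, hmod⟩ := Metric.uniformContinuousOn_iff.1
    (isCompact_Icc.uniformContinuousOn_of_continuous hw) ε' hε'
  obtain ⟨k, hk1, hkδ, hkR⟩ : ∃ k : ℕ, 1 ≤ k ∧ 1/δ < (k:ℝ) ∧
      dist ((∑ j ∈ Finset.range k, w (j/k))/k) I < ε' := by
    have h2 : ∀ᶠ k : ℕ in atTop, 1/δ < (k:ℝ) :=
      tendsto_natCast_atTop_atTop.eventually_gt_atTop (1/δ)
    have h3 := (Metric.tendsto_nhds.1 (WBaux.riemann_sum_tendsto hw)) ε' hε'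
    obtain ⟨k, h⟩ := ((eventually_ge_atTop 1).and (h2.and h3)).exists
    exact ⟨k, h.1, h.2.1, h.2.2⟩
  set R := (∑ j ∈ Finset.range k, w (j/k))/k with hRk
  have hkpos : (0:ℝ) < k := by exact_mod_cast hk1
  have hk0 : 0 < k := hk1
  have hinvk : 1/(k:ℝ) < δ := by
    rw [div_lt_iff₀ hkpos]
    nlinarith [(div_lt_iff₀ hδ).1 hkδ]
  set S : ℕ → ℝ := fun m => ∑ n ∈ Finset.range m, a n with hS
  set U : ℕ → ℝ := fun N => (∑ n ∈ Finset.range N, w ((((n*k)/N : ℕ):ℝ)/k) * a n)/N with hU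
  set c : ℕ → ℕ → ℕ := fun j N => (j*N + k - 1)/k with hc
  set Δ : ℕ → ℝ := fun j => w (((j:ℝ)+1)/k) - w ((j:ℝ)/k) with hΔ
  -- Claim A
  have claimA : ∀ N : ℕ, 1 ≤ N →
      |T N - U N| ≤ ε' * ((∑ n ∈ Finset.range N, |a n|)/N) := by
    intro N hN
    have hNpos : (0:ℝ) < N := by exact_mod_cast hN
    have pt : ∀ n ∈ Finset.range N,
        |w ((n:ℝ)/N) * a n - w ((((n*k)/N : ℕ):ℝ)/k) * a n| ≤ ε' * |a n| := by
      intro n hn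
      have hnN : n < N := Finset.mem_range.1 hn
      rw [← sub_mul, abs_mul]
      refine mul_le_mul_of_nonneg_right ?_ (abs_nonneg _)
      set m := (n*k)/N with hm
      have hmN : m * N ≤ n * k := Nat.div_mul_le_self _ _
      have hup : n * k < (m+1) * N := WBaux.lt_div_succ_mul (n*k) N (by omega)
      have hge : (m:ℝ)/k ≤ (n:ℝ)/N := by
        rw [div_le_div_iff₀ hkpos hNpos]; exact_mod_cast hmN
      have hlt : (n:ℝ)/N < ((m:ℝ)+1)/k := by
        rw [div_lt_div_iff₀ hNpos hkpos]
        push_cast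
        exact_mod_cast hup
      have hmem1 : (n:ℝ)/N ∈ Set.Icc (0:ℝ) 1 :=
        ⟨by positivity, by rw [div_le_one hNpos]; exact_mod_cast hnN.le⟩
      have hmem2 : (m:ℝ)/k ∈ Set.Icc (0:ℝ) 1 := ⟨by positivity, le_trans hge hmem1.2⟩
      have hdist : dist ((n:ℝ)/N) ((m:ℝ)/k) < δ := by
        rw [Real.dist_eq, abs_of_nonneg (by linarith)]
        have hid : ((m:ℝ)+1)/k - (m:ℝ)/k = 1/k := by ring
        linarith
      have := hmod _ hmem1 _ hmem2 hdist
      rw [Real.dist_eq] at this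
      exact this.le
    have h1 : T N - U N = (∑ n ∈ Finset.range N,
        (w ((n:ℝ)/N) * a n - w ((((n*k)/N : ℕ):ℝ)/k) * a n))/N := by
      rw [hT, hU]
      rw [Finset.sum_sub_distrib]
      rw [sub_div]
    rw [h1, abs_div, abs_of_pos hNpos, ← mul_div_assoc]
    apply div_le_div_of_nonneg_right ?_ hNpos.le
    calc |∑ n ∈ Finset.range N, (w ((n:ℝ)/N) * a n - w ((((n*k)/N : ℕ):ℝ)/k) * a n)|
        ≤ ∑ n ∈ Finset.range N, |w ((n:ℝ)/N) * a n - w ((((n*k)/N : ℕ):ℝ)/k) * a n| :=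
          Finset.abs_sum_le_sum_abs _ _
      _ ≤ ∑ n ∈ Finset.range N, ε' * |a n| := Finset.sum_le_sum pt
      _ = ε' * ∑ n ∈ Finset.range N, |a n| := by rw [Finset.mul_sum]
  -- identity
  have hUid : ∀ N : ℕ, 1 ≤ N → U N = w 0 * (S N / N)
      + ∑ j ∈ Finset.range (k-1), Δ j * (S N / N - S (c (j+1) N) / N) := by
    intro N hN
    have hN0 : 0 < N := hN
    have key : ∑ n ∈ Finset.range N, w ((((n*k)/N : ℕ):ℝ)/k) * a n
        = w 0 * S N + ∑ j ∈ Finset.range (k-1), Δ j * (S N - S (c (j+1) N)) := by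
      have hptw : ∀ n ∈ Finset.range N, w ((((n*k)/N : ℕ):ℝ)/k) * a n
          = w 0 * a n + ∑ j ∈ Finset.range (k-1),
              (if (j+1)*N ≤ n*k then Δ j else 0) * a n := by
        intro n hn
        have hnN : n < N := Finset.mem_range.1 hn
        set m := (n*k)/N with hm
        have hmk : m < k := by
          rw [hm, Nat.div_lt_iff_lt_mul hN0]
          calc n*k < N*k := by
                apply Nat.mul_lt_mul_of_lt_of_le hnN (le_refl k) (by omega)
            _ = k*N := Nat.mul_comm _ _
        have hmk1 : m ≤ k - 1 := by omega
        have hcond : ∀ j : ℕ, ((j+1)*N ≤ n*k ↔ j < m) := by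
          intro j
          rw [hm, Nat.lt_iff_add_one_le, Nat.le_div_iff_mul_le hN0]
        have htel : ∑ j ∈ Finset.range m, Δ j = w ((m:ℝ)/k) - w 0 := by
          have h := Finset.sum_range_sub (f := fun j => w ((j:ℝ)/k)) m
          simp only [hΔ]
          convert h using 2 with j
          · push_cast; ring_nf
          · simp
        have hres : ∑ j ∈ Finset.range (k-1), (if (j+1)*N ≤ n*k then Δ j else 0)
            = w ((m:ℝ)/k) - w 0 := by
          rw [← htel]
          rw [← Finset.sum_subset (Finset.range_subset_range.2 hmk1)
              (fun j _ hj => by rw [if_neg]; rw [hcond j]; simpa using hj)]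
          exact Finset.sum_congr rfl
            (fun j hj => by rw [if_pos ((hcond j).2 (Finset.mem_range.1 hj))])
        rw [← Finset.sum_mul, hres]
        ring
      rw [Finset.sum_congr rfl hptw, Finset.sum_add_distrib, ← Finset.mul_sum, Finset.sum_comm]
      congr 1
      apply Finset.sum_congr rfl
      intro j hj
      have hjk : j < k - 1 := Finset.mem_range.1 hj
      have hstep : ∀ n : ℕ, (if (j+1)*N ≤ n*k then Δ j else 0) * a n
          = Δ j * (if (j+1)*N ≤ n*k then a n else 0) := by
        intro n; split_ifs <;> ring
      rw [Finset.sum_congr rfl (fun n _ => hstep n), ← Finset.mul_sum]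
      congr 1
      rw [← Finset.sum_filter]
      have hset : (Finset.range N).filter (fun n => (j+1)*N ≤ n*k) = Finset.Ico (c (j+1) N) N := by
        ext n
        simp only [Finset.mem_filter, Finset.mem_range, Finset.mem_Ico, hc]
        rw [WBaux.ceil_le_iff hk1]
        tauto
      rw [hset]
      have hcN : c (j+1) N ≤ N := by
        simp only [hc]
        rw [WBaux.ceil_le_iff hk1]
        calc (j+1)*N ≤ k*N := Nat.mul_le_mul_right N (by omega)
          _ = N*k := Nat.mul_comm _ _
      rw [Finset.sum_Ico_eq_sub _ hcN]
    show (∑ n ∈ Finset.range N, w ((((n*k)/N : ℕ):ℝ)/k) * a n)/N = _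
    rw [key, add_div, Finset.sum_div, mul_div_assoc]
    congr 1
    apply Finset.sum_congr rfl
    intro j _
    rw [mul_div_assoc, sub_div]
  -- limits of the counting sequences
  have hcj : ∀ j : ℕ, Tendsto (fun N : ℕ => (c (j+1) N : ℝ)/N) atTop
      (nhds (((j:ℝ)+1)/k)) := by
    intro j
    apply tendsto_of_tendsto_of_tendsto_of_le_of_le' (g := fun _ : ℕ => ((j:ℝ)+1)/k)
      (h := fun N : ℕ => ((j:ℝ)+1)/k + 1/N) tendsto_const_nhds ?_ ?_ ?_
    · simpa using (tendsto_const_nhds (x := ((j:ℝ)+1)/k)).add tendsto_one_div_atTop_nhds_zero_nat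
    · filter_upwards [eventually_ge_atTop 1] with N hN
      have hNpos : (0:ℝ) < N := by exact_mod_cast hN
      have hlow : (j+1)*N ≤ (c (j+1) N) * k := by
        simp only [hc]
        exact WBaux.ceil_lower hk1 _ (Nat.mul_pos (by omega) (by omega))
      rw [div_le_div_iff₀ hkpos hNpos]
      calc ((j:ℝ)+1) * N = (((j+1)*N : ℕ) : ℝ) := by push_cast; ring
        _ ≤ (((c (j+1) N) * k : ℕ) : ℝ) := by exact_mod_cast hlow
        _ = (c (j+1) N : ℝ) * k := by push_cast; ring
    · filter_upwards [eventually_ge_atTop 1] with N hN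
      have hNpos : (0:ℝ) < N := by exact_mod_cast hN
      have hup : (c (j+1) N) * k ≤ (j+1)*N + k := by
        simp only [hc]; exact WBaux.ceil_upper hk1 _
      have hrhs : ((j:ℝ)+1)/k + 1/N = (((j:ℝ)+1)*N + k)/(k*N) := by
        field_simp
      rw [hrhs, div_le_div_iff₀ hNpos (by positivity)]
      calc (c (j+1) N : ℝ)*(k*N) = (((c (j+1) N) * k : ℕ):ℝ)*N := by push_cast; ring
        _ ≤ ((((j+1)*N + k : ℕ)):ℝ)*N := by
            apply mul_le_mul_of_nonneg_right ?_ hNpos.le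
            exact_mod_cast hup
        _ = (((j:ℝ)+1)*N + k)*N := by push_cast; ring
  have hpart : ∀ j : ℕ, Tendsto (fun N : ℕ => S (c (j+1) N)/N) atTop
      (nhds (((j:ℝ)+1)/k * L)) := fun j =>
    WBaux.tendsto_partial a hL (c (j+1)) (by positivity) (hcj j)
  -- limit of U
  have hlim2 : Tendsto U atTop
      (nhds (w 0 * L + ∑ j ∈ Finset.range (k-1), Δ j * (L - ((j:ℝ)+1)/k * L))) := by
    have base : Tendsto (fun N : ℕ => w 0 * (S N / N)
        + ∑ j ∈ Finset.range (k-1), Δ j * (S N / N - S (c (j+1) N) / N)) atTop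
        (nhds (w 0 * L + ∑ j ∈ Finset.range (k-1), Δ j * (L - ((j:ℝ)+1)/k * L))) := by
      apply Tendsto.add (hL.const_mul (w 0))
      apply tendsto_finset_sum
      intro j _
      exact ((hL.sub (hpart j)).const_mul (Δ j))
    apply Tendsto.congr' ?_ base
    filter_upwards [eventually_ge_atTop 1] with N hN
    exact (hUid N hN).symm
  have hval : w 0 * L + ∑ j ∈ Finset.range (k-1), Δ j * (L - ((j:ℝ)+1)/k * L) = L * R := by
    have habel := WBaux.abel_id (k-1) (fun j => w ((j:ℝ)/k))
    simp only [Nat.cast_zero, zero_div] at habel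
    rw [Nat.sub_add_cancel hk1] at habel
    rw [Nat.cast_sub hk1, Nat.cast_one] at habel
    rw [sub_add_cancel] at habel
    push_cast at habel
    -- habel : (k:ℝ) * w 0 + ∑ j ∈ range (k-1), (w ((↑j+1)/↑k) - w (↑j/↑k)) * ((↑k-1) - ↑j)
    --         = ∑ j ∈ range k, w (↑j/↑k)
    have hkne : (k:ℝ) ≠ 0 := hkpos.ne'
    apply mul_right_cancel₀ (b := (k:ℝ)) hkne
    have hmul : (w 0 * L + ∑ j ∈ Finset.range (k-1), Δ j * (L - ((j:ℝ)+1)/k * L)) * k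
        = L * ((k:ℝ) * w 0 + ∑ j ∈ Finset.range (k-1),
            (w (((j:ℝ)+1)/k) - w ((j:ℝ)/k)) * (((k:ℝ)-1) - j)) := by
      rw [add_mul, Finset.sum_mul, mul_add, Finset.mul_sum]
      congr 1
      · ring
      apply Finset.sum_congr rfl
      intro j _
      simp only [hΔ]
      field_simp
      ring
    rw [hmul, habel, hRk]
    field_simp
  rw [hval] at hlim2
  -- final assembly
  have hUev : ∀ᶠ N : ℕ in atTop, dist (U N) (L*R) < ε' := Metric.tendsto_nhds.1 hlim2 ε' hε'
  have hDev : ∀ᶠ N : ℕ in atTop, (∑ n ∈ Finset.range N, |a n|)/N ≤ M + 1 := by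
    filter_upwards [Metric.tendsto_nhds.1 hM 1 one_pos] with N h
    rw [Real.dist_eq] at h
    have := abs_lt.1 h
    linarith [this.2]
  filter_upwards [hUev, hDev, eventually_ge_atTop 1] with N h1 h2 h3
  rw [Real.dist_eq]
  have hclaim := claimA N h3
  rw [Real.dist_eq] at h1 hkR
  have hDnn : (0:ℝ) ≤ (∑ n ∈ Finset.range N, |a n|)/N := by positivity
  have htri : |T N - L*I| ≤ |T N - U N| + |U N - L*R| + |L*R - L*I| := by
    calc |T N - L*I| ≤ |T N - U N| + |U N - L*I| := abs_sub_le _ _ _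
      _ ≤ |T N - U N| + (|U N - L*R| + |L*R - L*I|) := by
          linarith [abs_sub_le (U N) (L*R) (L*I)]
      _ = _ := by ring
  have hb1 : |T N - U N| ≤ ε' * (M+1) :=
    hclaim.trans (mul_le_mul_of_nonneg_left h2 hε'.le)
  have hb3 : |L*R - L*I| ≤ |L| * ε' := by
    rw [← mul_sub, abs_mul]
    exact mul_le_mul_of_nonneg_left hkR.le (abs_nonneg L)
  have hεB : ε' * (3*B) = ε := by
    rw [hε'def]
    field_simp
  have : |T N - L*I| < ε' * (3*B) := by
    have hBdef : B = |L| + M + 1 := hB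
    nlinarith [hε', hM0, abs_nonneg L, h1]
  rw [hεB] at this
  exact this

end WBauxDet

namespace WBaux

variable {X : Type*} [MeasurableSpace X] {μ : Measure X}

lemma integral_comp_mp {f : X → X} (hf : MeasurePreserving f μ μ) {g : X → ℝ}
    (hg : AEStronglyMeasurable g μ) : ∫ x, g (f x) ∂μ = ∫ x, g x ∂μ := by
  have h := MeasureTheory.integral_map (φ := f) (f := g) hf.measurable.aemeasurable
    (by rwa [hf.map_eq])
  rw [hf.map_eq] at h
  exact h.symm

lemma integrable_comp_mp {f : X → X} (hf : MeasurePreserving f μ μ) {g : X → ℝ}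
    (hg : Integrable g μ) : Integrable (fun x => g (f x)) μ := by
  have h1 : Integrable g (Measure.map f μ) := by rwa [hf.map_eq]
  exact (integrable_map_measure (by rw [hf.map_eq]; exact hg.aestronglyMeasurable) hf.measurable.aemeasurable).1 h1

/-- Maximal ergodic theorem (Garsia's proof). -/
lemma maximal_ergodic {f : X → X} (hf : MeasurePreserving f μ μ)
    {h : X → ℝ} (hmeas : Measurable h) (hint : Integrable h μ) :
    0 ≤ ∫ x in {x | ∃ n : ℕ, 0 < ∑ i ∈ Finset.range (n+1), h (f^[i] x)}, h x ∂μ := by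
  set S : ℕ → X → ℝ := fun n x => ∑ i ∈ Finset.range n, h (f^[i] x) with hSdef
  have hSmeas : ∀ n, Measurable (S n) :=
    fun n => Finset.measurable_sum _ (fun i _ => hmeas.comp (hf.measurable.iterate i))
  have hSint : ∀ n, Integrable (S n) μ :=
    fun n => integrable_finset_sum _ (fun i _ => integrable_comp_mp (hf.iterate i) hint)
  have hSrec : ∀ n x, S (n+1) x = h x + S n (f x) := by
    intro n x
    rw [hSdef]
    simp only
    rw [Finset.sum_range_succ' (fun i => h (f^[i] x)) n]
    simp only [Function.iterate_succ_apply, Function.iterate_zero_apply]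
    ring
  -- Φ n x = max_{0 ≤ i ≤ n} S i x, defined recursively
  set Φ : ℕ → X → ℝ := fun n => Nat.rec (fun _ => (0:ℝ))
    (fun m Φm x => max (Φm x) (S (m+1) x)) n with hΦdef
  have hΦ0 : ∀ x, Φ 0 x = 0 := fun x => rfl
  have hΦsucc : ∀ n x, Φ (n+1) x = max (Φ n x) (S (n+1) x) := fun n x => rfl
  have hΦmeas : ∀ n, Measurable (Φ n) := by
    intro n
    induction n with
    | zero => exact measurable_const
    | succ m ih => exact ih.max (hSmeas (m+1))
  have hΦint : ∀ n, Integrable (Φ n) μ := by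
    intro n
    induction n with
    | zero => exact integrable_zero _ _ _
    | succ m ih => exact ih.sup (hSint (m+1))
  have hΦnonneg : ∀ n x, 0 ≤ Φ n x := by
    intro n x
    induction n with
    | zero => simp [hΦ0]
    | succ m ih => rw [hΦsucc]; exact le_trans ih (le_max_left _ _)
  have hSleΦ : ∀ n x, S n x ≤ Φ n x := by
    intro n x
    induction n with
    | zero => simp [hΦ0, hSdef]
    | succ m _ => rw [hΦsucc]; exact le_max_right _ _
  have hΦmono : ∀ n x, Φ n x ≤ Φ (n+1) x := by
    intro n x; rw [hΦsucc]; exact le_max_left _ _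
  have hkey : ∀ n x, Φ n x ≤ max 0 (h x + Φ n (f x)) := by
    intro n
    induction n with
    | zero => intro x; rw [hΦ0]; exact le_max_left _ _
    | succ m ih =>
      intro x
      rw [hΦsucc]
      apply max_le
      · exact le_trans (ih x) (max_le_max (le_refl 0)
          (by linarith [hΦmono m (f x)]))
      · rw [hSrec]
        refine le_trans ?_ (le_max_right _ _)
        have := hSleΦ m (f x)
        have := hΦmono m (f x)
        linarith
  -- per-n maximal inequality
  have hper : ∀ n : ℕ, 0 ≤ ∫ x in {x | 0 < Φ n x}, h x ∂μ := by
    intro n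
    set A := {x | 0 < Φ n x} with hA
    have hAmeas : MeasurableSet A := measurableSet_lt measurable_const (hΦmeas n)
    have hptA : ∀ x ∈ A, Φ n x - Φ n (f x) ≤ h x := by
      intro x hx
      have hx' : 0 < Φ n x := hx
      have := hkey n x
      rcases le_max_iff.1 this with h0 | h1
      · linarith
      · linarith
    have hΦf_int : Integrable (fun x => Φ n (f x)) μ := integrable_comp_mp hf (hΦint n)
    have step1 : ∫ x in A, (Φ n x - Φ n (f x)) ∂μ ≤ ∫ x in A, h x ∂μ := by
      apply setIntegral_mono_on (((hΦint n).sub hΦf_int).integrableOn) hint.integrableOn hAmeas hptA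
    have step2 : ∫ x in A, (Φ n x - Φ n (f x)) ∂μ
        = ∫ x in A, Φ n x ∂μ - ∫ x in A, Φ n (f x) ∂μ :=
      integral_sub ((hΦint n).integrableOn) (hΦf_int.integrableOn)
    have step3 : ∫ x in A, Φ n x ∂μ = ∫ x, Φ n x ∂μ := by
      apply setIntegral_eq_integral_of_forall_compl_eq_zero
      intro x hx
      have : ¬ 0 < Φ n x := hx
      have := hΦnonneg n x
      linarith
    have step4 : ∫ x in A, Φ n (f x) ∂μ ≤ ∫ x, Φ n (f x) ∂μ :=
      setIntegral_le_integral hΦf_int (Filter.Eventually.of_forall (fun x => hΦnonneg n (f x)))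
    have step5 : ∫ x, Φ n (f x) ∂μ = ∫ x, Φ n x ∂μ :=
      integral_comp_mp hf (hΦint n).aestronglyMeasurable
    have : 0 ≤ ∫ x in A, (Φ n x - Φ n (f x)) ∂μ := by
      rw [step2, step3]
      have := step4.trans_eq step5
      linarith
    linarith
  -- pass to the union
  have hmono : Monotone (fun n => {x | 0 < Φ n x}) := by
    intro m n hmn
    apply Set.setOf_subset_setOf.2
    intro x hx
    have : Φ m x ≤ Φ n x := by
      clear hx
      induction hmn with
      | refl => exact le_refl _
      | step _ ih => exact le_trans ih (hΦmono _ x)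
    linarith
  have hunion : (⋃ n, {x | 0 < Φ n x}) = {x | ∃ n : ℕ, 0 < S (n+1) x} := by
    ext x
    simp only [Set.mem_iUnion, Set.mem_setOf_eq]
    constructor
    · rintro ⟨n, hn⟩
      by_contra hno
      push_neg at hno
      have hall : ∀ i, S i x ≤ 0 := by
        intro i
        cases i with
        | zero => simp [hSdef]
        | succ m => exact hno m
      have : Φ n x ≤ 0 := by
        clear hn
        induction n with
        | zero => simp [hΦ0]
        | succ m ih => rw [hΦsucc]; exact max_le ih (hall (m+1))
      linarith
    · rintro ⟨n, hn⟩
      exact ⟨n+1, lt_of_lt_of_le hn (hSleΦ (n+1) x)⟩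
  have htend : Tendsto (fun n => ∫ x in {x | 0 < Φ n x}, h x ∂μ) atTop
      (nhds (∫ x in (⋃ n, {x | 0 < Φ n x}), h x ∂μ)) := by
    apply tendsto_setIntegral_of_monotone
      (fun n => measurableSet_lt measurable_const (hΦmeas n)) hmono hint.integrableOn
  have hlim : 0 ≤ ∫ x in (⋃ n, {x | 0 < Φ n x}), h x ∂μ := ge_of_tendsto' htend hper
  rwa [hunion] at hlim

/-- If `∫ g < α` then a.e. the sums `∑_{i<n} (g∘fⁱ - α)` are bounded above. -/
lemma birkhoff_upper {f : X → X} [IsProbabilityMeasure μ] (hf : Ergodic f μ)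
    {g : X → ℝ} (hmeas : Measurable g) (hint : Integrable g μ) {α : ℝ}
    (hα : ∫ x, g x ∂μ < α) :
    ∀ᵐ x ∂μ, BddAbove (Set.range
      (fun n : ℕ => ∑ i ∈ Finset.range n, (g (f^[i] x) - α))) := by
  set h : X → ℝ := fun x => g x - α with hhdef
  have hhmeas : Measurable h := hmeas.sub measurable_const
  have hhint : Integrable h μ := hint.sub (integrable_const α)
  set S : ℕ → X → ℝ := fun n x => ∑ i ∈ Finset.range n, h (f^[i] x) with hSdef
  have hSmeas : ∀ n, Measurable (S n) :=
    fun n => Finset.measurable_sum _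
      (fun i _ => hhmeas.comp (hf.toMeasurePreserving.measurable.iterate i))
  have hSrec : ∀ n x, S n (f x) = S (n+1) x - h x := by
    intro n x
    rw [hSdef]
    simp only
    rw [Finset.sum_range_succ' (fun i => h (f^[i] x)) n]
    simp only [Function.iterate_succ_apply, Function.iterate_zero_apply]
    ring
  set E := {x | ¬ BddAbove (Set.range (fun n : ℕ => S n x))} with hEdef
  have hEeq : E = ⋂ (q : ℚ), ⋃ (n : ℕ), {x | (q:ℝ) < S n x} := by
    ext x
    simp only [hEdef, Set.mem_iInter, Set.mem_iUnion, Set.mem_setOf_eq]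
    constructor
    · intro hx q
      by_contra hq
      push_neg at hq
      exact hx ⟨q, by rintro y ⟨n, rfl⟩; exact hq n⟩
    · rintro hx ⟨C, hC⟩
      obtain ⟨q, hq⟩ := exists_rat_gt C
      obtain ⟨n, hn⟩ := hx q
      have := hC (Set.mem_range_self n)
      linarith
  have hEmeas : MeasurableSet E := by
    rw [hEeq]
    exact MeasurableSet.iInter (fun q => MeasurableSet.iUnion
      (fun n => measurableSet_lt measurable_const (hSmeas n)))
  have hEinv : f ⁻¹' E = E := by
    ext x
    simp only [hEdef, Set.mem_preimage, Set.mem_setOf_eq]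
    apply not_congr
    constructor
    · rintro ⟨C, hC⟩
      refine ⟨max 0 (h x + C), ?_⟩
      rintro y ⟨n, rfl⟩
      simp only
      cases n with
      | zero => simpa [hSdef] using le_max_left 0 (h x + C)
      | succ n =>
        have := hC (Set.mem_range_self n)
        rw [hSrec] at this
        have h2 := le_max_right 0 (h x + C)
        linarith
    · rintro ⟨C, hC⟩
      refine ⟨C - h x, ?_⟩
      rintro y ⟨n, rfl⟩
      simp only
      rw [hSrec]
      have := hC (Set.mem_range_self (n+1))
      linarith
  rcases hf.toPreErgodic.ae_empty_or_univ hEmeas hEinv with hE | hE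
  · have hE0 : μ E = 0 := ae_eq_empty.1 hE
    rw [ae_iff]
    convert hE0 using 2
  · exfalso
    set A := {x | ∃ n : ℕ, 0 < ∑ i ∈ Finset.range (n+1), h (f^[i] x)} with hAdef
    have hEA : E ⊆ A := by
      intro x hx
      by_contra hno
      rw [hAdef] at hno
      simp only [Set.mem_setOf_eq, not_exists, not_lt] at hno
      apply hx
      refine ⟨0, ?_⟩
      rintro y ⟨n, rfl⟩
      simp only
      cases n with
      | zero => simp [hSdef]
      | succ n => exact hno n
    have hAuniv : A =ᵐ[μ] Set.univ := by
      rw [ae_eq_univ]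
      exact measure_mono_null (Set.compl_subset_compl.2 hEA) (ae_eq_univ.1 hE)
    have hmax := maximal_ergodic hf.toMeasurePreserving hhmeas hhint
    have : ∫ x in A, h x ∂μ = ∫ x, h x ∂μ := by
      rw [Measure.restrict_congr_set hAuniv, Measure.restrict_univ]
    rw [hAdef] at this
    rw [this] at hmax
    have hI : ∫ x, h x ∂μ = (∫ x, g x ∂μ) - α := by
      rw [hhdef]
      rw [integral_sub hint (integrable_const α), integral_const]
      simp
    rw [hI] at hmax
    linarith

/-- Upper-bound half of Birkhoff for measurable `g`. -/
lemma birkhoff_le {f : X → X} [IsProbabilityMeasure μ] (hf : Ergodic f μ)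
    {g : X → ℝ} (hmeas : Measurable g) (hint : Integrable g μ) :
    ∀ᵐ x ∂μ, ∀ ε : ℝ, 0 < ε → ∀ᶠ N : ℕ in atTop,
      (∑ i ∈ Finset.range N, g (f^[i] x))/N < (∫ x, g x ∂μ) + ε := by
  have hae : ∀ᵐ x ∂μ, ∀ q : ℚ, ((∫ x, g x ∂μ) < q) →
      BddAbove (Set.range (fun n : ℕ => ∑ i ∈ Finset.range n, (g (f^[i] x) - q))) := by
    rw [ae_all_iff]
    intro q
    by_cases hq : (∫ x, g x ∂μ) < q
    · exact (birkhoff_upper hf hmeas hint hq).mono (fun x hx _ => hx)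
    · filter_upwards with x h
      exact absurd h hq
  filter_upwards [hae] with x hx
  intro ε hε
  obtain ⟨q, hq1, hq2⟩ := exists_rat_btwn
    (show (∫ x, g x ∂μ) < (∫ x, g x ∂μ) + ε/2 by linarith)
  obtain ⟨C, hC⟩ := hx q hq1
  have hCub : ∀ n : ℕ, ∑ i ∈ Finset.range n, g (f^[i] x) ≤ C + n * q := by
    intro n
    have h1 := hC (Set.mem_range_self n)
    rw [Finset.sum_sub_distrib, Finset.sum_const, Finset.card_range, nsmul_eq_mul] at h1
    linarith
  have hCN : ∀ᶠ N : ℕ in atTop, C/(N:ℝ) < ε/2 :=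
    (tendsto_const_div_atTop_nhds_zero_nat C).eventually (eventually_lt_nhds (by linarith))
  filter_upwards [hCN, eventually_ge_atTop 1] with N h1 h2
  have hNpos : (0:ℝ) < N := by exact_mod_cast h2
  have hdiv : (∑ i ∈ Finset.range N, g (f^[i] x))/N ≤ C/N + q := by
    calc (∑ i ∈ Finset.range N, g (f^[i] x))/N ≤ (C + N*q)/N :=
          div_le_div_of_nonneg_right (hCub N) hNpos.le
      _ = C/N + q := by field_simp
  linarith

/-- Birkhoff ergodic theorem, ergodic case. -/
lemma birkhoff_ergodic {f : X → X} [IsProbabilityMeasure μ] (hf : Ergodic f μ)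
    {g : X → ℝ} (hint : Integrable g μ) :
    ∀ᵐ x ∂μ, Tendsto (fun N : ℕ => (∑ i ∈ Finset.range N, g (f^[i] x))/N) atTop
      (nhds (∫ x, g x ∂μ)) := by
  -- reduce to a strongly measurable representative
  have hmeas' := hint.aestronglyMeasurable
  set g' := hmeas'.mk g with hg'def
  have hg'meas : Measurable g' := hmeas'.stronglyMeasurable_mk.measurable
  have hgg' : g =ᵐ[μ] g' := hmeas'.ae_eq_mk
  have hint' : Integrable g' μ := hint.congr hgg'
  have hIeq : ∫ x, g' x ∂μ = ∫ x, g x ∂μ := (integral_congr_ae hgg').symm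
  have hcomp : ∀ᵐ x ∂μ, ∀ i : ℕ, g (f^[i] x) = g' (f^[i] x) := by
    rw [ae_all_iff]
    intro i
    exact (hf.toMeasurePreserving.iterate i).quasiMeasurePreserving.ae_eq_comp hgg'
  suffices hmain : ∀ᵐ x ∂μ, Tendsto (fun N : ℕ => (∑ i ∈ Finset.range N, g' (f^[i] x))/N)
      atTop (nhds (∫ x, g x ∂μ)) by
    filter_upwards [hmain, hcomp] with x h1 h2
    apply h1.congr
    intro N
    congr 1
    exact Finset.sum_congr rfl (fun i _ => (h2 i).symm)
  rw [← hIeq]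
  have hup := birkhoff_le hf hg'meas hint'
  have hdown := birkhoff_le hf (g := fun x => -(g' x)) hg'meas.neg hint'.neg
  rw [integral_neg] at hdown
  filter_upwards [hup, hdown] with x h1 h2
  rw [Metric.tendsto_nhds]
  intro ε hε
  filter_upwards [h1 ε hε, h2 ε hε] with N hN1 hN2
  rw [Real.dist_eq, abs_lt]
  constructor
  · have : (∑ i ∈ Finset.range N, -(g' (f^[i] x)))/N
        = -((∑ i ∈ Finset.range N, g' (f^[i] x))/N) := by
      rw [Finset.sum_neg_distrib, neg_div]
    rw [this] at hN2
    linarith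
  · linarith

end WBaux


/-- Weighted Birkhoff ergodic theorem: for an ergodic measure-preserving map `f` on a
probability space, an integrable observable `g`, and a continuous nonnegative weight
`w` on `[0,1]` with unit integral that is not identically zero, the weighted Birkhoff
averages converge almost everywhere to the space average `∫ g dμ`. -/
theorem weighted_birkhoff_ergodic_theorem
    {X : Type*} [MeasurableSpace X] (μ : Measure X) [IsProbabilityMeasure μ]
    (f : X → X) (hf : Ergodic f μ)
    (g : X → ℝ) (hg : Integrable g μ)
    (w : ℝ → ℝ) (hw : ContinuousOn w (Set.Icc 0 1))
    (hw0 : ∀ x ∈ Set.Icc (0:ℝ) 1, 0 ≤ w x)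
    (hint : ∫ x in (0:ℝ)..1, w x = 1)
    (hne : ∃ x ∈ Set.Icc (0:ℝ) 1, w x ≠ 0) :
    ∀ᵐ x ∂μ, Tendsto
      (fun N : ℕ =>
        (∑ n ∈ Finset.range N, w (n / N) * g (f^[n] x)) /
          (∑ n ∈ Finset.range N, w (n / N)))
      atTop (nhds (∫ y, g y ∂μ)) := by
  have hbirk := WBaux.birkhoff_ergodic hf hg
  have habs := WBaux.birkhoff_ergodic hf hg.abs
  have hden : Tendsto (fun N : ℕ => (∑ n ∈ Finset.range N, w (n/N))/N) atTop (nhds 1) := by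
    have := WBaux.riemann_sum_tendsto hw
    rwa [hint] at this
  filter_upwards [hbirk, habs] with x h1 h2
  have h2' : Tendsto (fun N : ℕ => (∑ n ∈ Finset.range N, |g (f^[n] x)|)/N) atTop
      (nhds (∫ y, |g y| ∂μ)) := h2
  have hnum := WBaux.weighted_cesaro (fun n => g (f^[n] x)) h1 h2' hw
  rw [hint, mul_one] at hnum
  have hcomb := hnum.div hden one_ne_zero
  rw [div_one] at hcomb
  apply Tendsto.congr' ?_ hcomb
  filter_upwards [eventually_ge_atTop 1] with N hN
  have hNne : (N:ℝ) ≠ 0 := Nat.cast_ne_zero.2 (by omega)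
  exact div_div_div_cancel_right₀ hNne _ _
end

section
/- Suppose the orbit of x under f is periodic with period p, i.e., f^p(x) = x, and g : X → ℝ is any function, and w : [0,1] → ℝ is a C¹ function with ∫₀¹ w = 1. Then the weighted Birkhoff average WB_N(g)(x) = (1/α_N) ∑_{n=0}^{N-1} w(n/N) g(fⁿ(x)) converges as N → ∞ to the periodic-orbit average (1/p) ∑_{k=0}^{p-1} g(f^k(x)). -/
open Filter

/-- If `x` has period `p` under `f`, then for a `C¹` weight `w` with `∫₀¹ w = 1`,
the weighted Birkhoff averages of any `g` along the orbit of `x` converge to the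
average of `g` over one period. -/
theorem weighted_birkhoff_periodic
    {X : Type*} (f : X → X) (x : X) (p : ℕ) (hp : 1 ≤ p) (hper : f^[p] x = x)
    (g : X → ℝ)
    (w : ℝ → ℝ) (hw : ContDiff ℝ 1 w)
    (hint : ∫ t in (0:ℝ)..1, w t = 1) :
    Tendsto
      (fun N : ℕ =>
        (∑ n ∈ Finset.range N, w (n / N) * g (f^[n] x)) /
          (∑ n ∈ Finset.range N, w (n / N)))
      atTop (nhds ((1 / p) * ∑ k ∈ Finset.range p, g (f^[k] x))) := by
  have hp0 : (p : ℝ) ≠ 0 := Nat.cast_ne_zero.mpr (by omega)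
  set m : ℝ := (1 / p) * ∑ k ∈ Finset.range p, g (f^[k] x) with hm
  set h : ℕ → ℝ := fun n => g (f^[n] x) with hh
  have hper' : ∀ n, h (n + p) = h n := by
    intro n
    simp only [hh, Function.iterate_add_apply, hper]
  set e : ℕ → ℝ := fun n => h n - m with he
  set S : ℕ → ℝ := fun N => ∑ n ∈ Finset.range N, e n with hS
  have hSp : S p = 0 := by
    have h1 : S p = (∑ n ∈ Finset.range p, h n) - p * m := by
      simp [hS, he, Finset.sum_sub_distrib, mul_comm]
    rw [h1, hm]
    field_simp
    ring
  have hSper : ∀ N, S (N + p) = S N := by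
    intro N
    induction N with
    | zero => simpa [hS] using hSp
    | succ n ih =>
      have h1 : n + 1 + p = (n + p) + 1 := by omega
      have h2 : S ((n + p) + 1) = S (n + p) + e (n + p) := Finset.sum_range_succ e (n + p)
      have h3 : S (n + 1) = S n + e n := Finset.sum_range_succ e n
      have h4 : e (n + p) = e n := by simp only [he, hper' n]
      rw [h1, h2, h4, ih, ← h3]
  set C : ℝ := ∑ n ∈ Finset.range p, |e n| with hC
  have hC0 : 0 ≤ C := Finset.sum_nonneg fun _ _ => abs_nonneg _
  have hSred : ∀ q r, S (q * p + r) = S r := by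
    intro q
    induction q with
    | zero => simp
    | succ k ih =>
      intro r
      have h1 : (k + 1) * p + r = (k * p + r) + p := by ring
      rw [h1, hSper, ih]
  have hSbound : ∀ N, |S N| ≤ C := by
    intro N
    have hN : N = (N / p) * p + N % p := (Nat.div_add_mod' N p).symm
    rw [hN, hSred]
    calc |S (N % p)| ≤ ∑ n ∈ Finset.range (N % p), |e n| := Finset.abs_sum_le_sum_abs _ _
      _ ≤ C := Finset.sum_le_sum_of_subset_of_nonneg
          (Finset.range_subset_range.mpr (le_of_lt (Nat.mod_lt N (by omega : p > 0))))
          (fun _ _ _ => abs_nonneg _)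
  -- Lipschitz constant for w on [0,1]
  obtain ⟨D, hD⟩ := (isCompact_Icc : IsCompact (Set.Icc (0:ℝ) 1)).exists_bound_of_continuousOn
      ((hw.continuous_deriv le_rfl).continuousOn)
  have hD0 : 0 ≤ D := le_trans (norm_nonneg _) (hD 0 (by norm_num))
  have hLip : LipschitzOnWith D.toNNReal w (Set.Icc (0:ℝ) 1) :=
    Convex.lipschitzOnWith_of_nnnorm_deriv_le
      (fun y _ => (hw.differentiable one_ne_zero).differentiableAt)
      (fun y hy => by
        rw [← NNReal.coe_le_coe, coe_nnnorm, Real.coe_toNNReal _ hD0]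
        exact hD y hy)
      (convex_Icc 0 1)
  have hLip' : ∀ a ∈ Set.Icc (0:ℝ) 1, ∀ b ∈ Set.Icc (0:ℝ) 1, |w a - w b| ≤ D * |a - b| := by
    intro a ha b hb
    have h1 := hLip.dist_le_mul a ha b hb
    rw [Real.dist_eq, Real.dist_eq, Real.coe_toNNReal _ hD0] at h1
    exact h1
  -- bound on |w| on [0,1]
  obtain ⟨M, hM⟩ := (isCompact_Icc : IsCompact (Set.Icc (0:ℝ) 1)).exists_bound_of_continuousOn
      hw.continuous.continuousOn
  have hM0 : 0 ≤ M := le_trans (norm_nonneg _) (hM 0 (by norm_num))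
  set A : ℕ → ℝ := fun N => ∑ n ∈ Finset.range N, w (n / N) with hA
  -- points n/N lie in [0,1]
  have hmem : ∀ N : ℕ, 1 ≤ N → ∀ n : ℕ, n ≤ N → ((n : ℝ) / N) ∈ Set.Icc (0:ℝ) 1 := by
    intro N hN n hn
    have hNpos : (0:ℝ) < N := by exact_mod_cast hN
    constructor
    · positivity
    · rw [div_le_one hNpos]
      exact_mod_cast hn
  -- Riemann sum estimate
  have hRiem : ∀ N : ℕ, 1 ≤ N → |A N / N - 1| ≤ D / N := by
    intro N hN
    have hNpos : (0:ℝ) < N := by exact_mod_cast hN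
    have hintegr : ∀ a b : ℝ, IntervalIntegrable w MeasureTheory.volume a b :=
      fun a b => hw.continuous.intervalIntegrable a b
    have hsplit : ∑ i ∈ Finset.range N, ∫ t in ((i:ℝ)/N)..(((i:ℕ)+1:ℕ):ℝ)/N, w t
        = ∫ t in (0:ℝ)..1, w t := by
      have := intervalIntegral.sum_integral_adjacent_intervals
        (a := fun i : ℕ => (i : ℝ) / N) (n := N) (f := w) (μ := MeasureTheory.volume)
        (fun k _ => hintegr _ _)
      simpa [div_self hNpos.ne'] using this
    have hterm : ∀ i ∈ Finset.range N,
        |w ((i:ℝ)/N) / N - ∫ t in ((i:ℝ)/N)..(((i:ℕ)+1:ℕ):ℝ)/N, w t| ≤ D / N ^ 2 := by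
      intro i hi
      have hiN : i < N := Finset.mem_range.mp hi
      have hle : ((i:ℝ)/N) ≤ ((i:ℝ)+1)/N := by gcongr; linarith
      have hmem_i : ((i:ℝ)/N) ∈ Set.Icc (0:ℝ) 1 := hmem N hN i (le_of_lt hiN)
      have hconst : ∫ t in ((i:ℝ)/N)..(((i:ℝ)+1)/N), w ((i:ℝ)/N) = w ((i:ℝ)/N) / N := by
        rw [intervalIntegral.integral_const]
        have : ((i:ℝ)+1)/N - (i:ℝ)/N = 1 / N := by field_simp; ring
        rw [this]
        simp [smul_eq_mul]
        ring
      have hsub : ∫ t in ((i:ℝ)/N)..(((i:ℝ)+1)/N), (w t - w ((i:ℝ)/N))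
          = (∫ t in ((i:ℝ)/N)..(((i:ℝ)+1)/N), w t) - w ((i:ℝ)/N) / N := by
        rw [intervalIntegral.integral_sub (hintegr _ _) (intervalIntegrable_const), hconst]
      have hbnd : ‖∫ t in ((i:ℝ)/N)..(((i:ℝ)+1)/N), (w t - w ((i:ℝ)/N))‖
          ≤ (D / N) * |((i:ℝ)+1)/N - (i:ℝ)/N| := by
        apply intervalIntegral.norm_integral_le_of_norm_le_const
        intro t ht
        rw [Set.uIoc_of_le hle] at ht
        have ht1 : (i:ℝ)/N < t := ht.1
        have ht2 : t ≤ ((i:ℝ)+1)/N := ht.2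
        have htmem : t ∈ Set.Icc (0:ℝ) 1 := by
          constructor
          · exact le_trans hmem_i.1 (le_of_lt ht1)
          · refine le_trans ht2 ?_
            have := (hmem N hN (i+1) hiN).2
            push_cast at this ⊢
            linarith
        have hkey := hLip' t htmem _ hmem_i
        rw [Real.norm_eq_abs]
        have hdiff : ((i:ℝ)+1)/N - (i:ℝ)/N = 1/N := by field_simp; ring
        have habs1 : |t - (i:ℝ)/N| ≤ 1 / N := by
          rw [abs_of_nonneg (by linarith)]
          linarith
        have habs2 : |((i:ℝ)+1)/N - (i:ℝ)/N| = 1 / N := by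
          rw [hdiff, abs_of_pos (by positivity)]
        calc |w t - w ((i:ℝ)/N)| ≤ D * |t - (i:ℝ)/N| := hkey
          _ ≤ D * (1/N) := mul_le_mul_of_nonneg_left habs1 hD0
          _ = D / N := mul_one_div D N
      have heq1 : ((i:ℝ)+1)/N - (i:ℝ)/N = 1/N := by field_simp; ring
      have habs2' : |((i:ℝ)+1)/N - (i:ℝ)/N| = 1 / N := by
        rw [heq1]; exact abs_of_pos (one_div_pos.mpr hNpos)
      have hc : ((((i:ℕ)+1:ℕ)):ℝ) = (i:ℝ)+1 := by push_cast; ring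
      rw [hc]
      have := hbnd
      rw [hsub, Real.norm_eq_abs, habs2'] at this
      rw [abs_sub_comm]
      calc |(∫ t in ((i:ℝ)/N)..(((i:ℝ)+1)/N), w t) - w ((i:ℝ)/N) / N|
          ≤ D / N * (1 / N) := this
        _ = D / N ^ 2 := by ring
    have key : |A N / N - 1| = |∑ i ∈ Finset.range N,
        (w ((i:ℝ)/N) / N - ∫ t in ((i:ℝ)/N)..(((i:ℕ)+1:ℕ):ℝ)/N, w t)| := by
      rw [Finset.sum_sub_distrib, hsplit, hint, ← Finset.sum_div]
    rw [key]
    calc |∑ i ∈ Finset.range N, (w ((i:ℝ)/N) / N - ∫ t in ((i:ℝ)/N)..(((i:ℕ)+1:ℕ):ℝ)/N, w t)|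
        ≤ ∑ i ∈ Finset.range N, |w ((i:ℝ)/N) / N - ∫ t in ((i:ℝ)/N)..(((i:ℕ)+1:ℕ):ℝ)/N, w t| :=
          Finset.abs_sum_le_sum_abs _ _
      _ ≤ ∑ _i ∈ Finset.range N, D / N ^ 2 := Finset.sum_le_sum hterm
      _ = N * (D / N ^ 2) := by rw [Finset.sum_const, Finset.card_range, nsmul_eq_mul]
      _ = D / N := by rw [sq]; field_simp
  -- limit of A N / N
  have hDto : Tendsto (fun N : ℕ => D / N) atTop (nhds 0) :=
    tendsto_const_nhds.div_atTop tendsto_natCast_atTop_atTop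
  have hAlim : Tendsto (fun N : ℕ => A N / N) atTop (nhds 1) := by
    have h0 : Tendsto (fun N : ℕ => A N / N - 1) atTop (nhds 0) := by
      apply squeeze_zero_norm' ?_ hDto
      filter_upwards [eventually_ge_atTop 1] with N hN
      simpa [Real.norm_eq_abs] using hRiem N hN
    have := h0.add_const 1
    simpa using this
  -- Abel summation bound for E N = ∑ w(n/N) e n
  set E : ℕ → ℝ := fun N => ∑ n ∈ Finset.range N, w (n / N) * e n with hE
  have hEbound : ∀ N : ℕ, 1 ≤ N → |E N| ≤ M * C + D * C := by
    intro N hN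
    have hNpos : (0:ℝ) < N := by exact_mod_cast hN
    have habel := Finset.sum_range_by_parts (fun n : ℕ => w ((n:ℝ) / N)) e N
    simp only [smul_eq_mul] at habel
    have hEeq : E N = w (((N - 1 : ℕ):ℝ) / N) * S N
        - ∑ i ∈ Finset.range (N - 1), (w (((i+1:ℕ):ℝ)/N) - w ((i:ℝ)/N)) * S (i + 1) := habel
    rw [hEeq]
    have hterm1 : |w (((N - 1 : ℕ):ℝ) / N) * S N| ≤ M * C := by
      rw [abs_mul]
      have h1 : |w (((N - 1 : ℕ):ℝ) / N)| ≤ M := by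
        have := hM _ (hmem N hN (N - 1) (Nat.sub_le N 1))
        rwa [Real.norm_eq_abs] at this
      exact mul_le_mul h1 (hSbound N) (abs_nonneg _) hM0
    have hterm2 : |∑ i ∈ Finset.range (N - 1), (w (((i+1:ℕ):ℝ)/N) - w ((i:ℝ)/N)) * S (i + 1)|
        ≤ D * C := by
      calc |∑ i ∈ Finset.range (N - 1), (w (((i+1:ℕ):ℝ)/N) - w ((i:ℝ)/N)) * S (i + 1)|
          ≤ ∑ i ∈ Finset.range (N - 1), |(w (((i+1:ℕ):ℝ)/N) - w ((i:ℝ)/N)) * S (i + 1)| :=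
            Finset.abs_sum_le_sum_abs _ _
        _ ≤ ∑ _i ∈ Finset.range (N - 1), (D / N) * C := by
            apply Finset.sum_le_sum
            intro i hi
            have hiN : i < N - 1 := Finset.mem_range.mp hi
            have hi1 : i + 1 ≤ N := by omega
            rw [abs_mul]
            have hd : |w (((i+1:ℕ):ℝ)/N) - w ((i:ℝ)/N)| ≤ D / N := by
              have := hLip' _ (hmem N hN (i+1) hi1) _ (hmem N hN i (by omega))
              refine le_trans this ?_
              have heq0 : ((i+1:ℕ):ℝ)/N - (i:ℝ)/N = 1 / N := by push_cast; field_simp; ring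
              have heq : |((i+1:ℕ):ℝ)/N - (i:ℝ)/N| = 1 / N := by
                rw [heq0]; exact abs_of_pos (one_div_pos.mpr hNpos)
              rw [heq, mul_one_div]
            exact mul_le_mul hd (hSbound (i+1)) (abs_nonneg _) (by positivity)
        _ = ((N - 1 : ℕ):ℝ) * ((D / N) * C) := by
            rw [Finset.sum_const, Finset.card_range, nsmul_eq_mul]
        _ ≤ D * C := by
            have h1 : ((N - 1 : ℕ):ℝ) ≤ N := by
              exact_mod_cast Nat.sub_le N 1
            have h2 : ((N - 1 : ℕ):ℝ) * ((D / N) * C) = (((N - 1 : ℕ):ℝ) / N) * (D * C) := by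
              ring
            rw [h2]
            have h3 : (((N - 1 : ℕ):ℝ) / N) ≤ 1 := by
              rw [div_le_one hNpos]; exact h1
            nlinarith [mul_nonneg hD0 hC0, div_nonneg (Nat.cast_nonneg (N-1)) hNpos.le]
    calc |w (((N - 1 : ℕ):ℝ) / N) * S N
        - ∑ i ∈ Finset.range (N - 1), (w (((i+1:ℕ):ℝ)/N) - w ((i:ℝ)/N)) * S (i + 1)|
        ≤ |w (((N - 1 : ℕ):ℝ) / N) * S N|
          + |∑ i ∈ Finset.range (N - 1), (w (((i+1:ℕ):ℝ)/N) - w ((i:ℝ)/N)) * S (i + 1)| :=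
          abs_sub _ _
      _ ≤ M * C + D * C := add_le_add hterm1 hterm2
  -- limit of E N / N
  have hElim : Tendsto (fun N : ℕ => E N / N) atTop (nhds 0) := by
    apply squeeze_zero_norm' ?_
      (tendsto_const_nhds.div_atTop tendsto_natCast_atTop_atTop
        : Tendsto (fun N : ℕ => (M * C + D * C) / N) atTop (nhds 0))
    filter_upwards [eventually_ge_atTop 1] with N hN
    have hNpos : (0:ℝ) < N := by exact_mod_cast hN
    rw [Real.norm_eq_abs, abs_div, abs_of_pos hNpos]
    exact (div_le_div_iff_of_pos_right hNpos).mpr (hEbound N hN)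
  set B : ℕ → ℝ := fun N => ∑ n ∈ Finset.range N, w (n / N) * h n with hB
  have hBAE : ∀ N, B N = m * A N + E N := by
    intro N
    simp only [hB, hA, hE, he]
    rw [Finset.mul_sum, ← Finset.sum_add_distrib]
    apply Finset.sum_congr rfl
    intro n _
    ring
  have hBlim : Tendsto (fun N : ℕ => B N / N) atTop (nhds m) := by
    have h1 : Tendsto (fun N : ℕ => m * (A N / N) + E N / N) atTop (nhds (m * 1 + 0)) :=
      (hAlim.const_mul m).add hElim
    simp only [mul_one, add_zero] at h1
    apply h1.congr
    intro N
    rw [hBAE N]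
    ring
  -- conclude
  have hfinal : Tendsto (fun N : ℕ => (B N / N) / (A N / N)) atTop (nhds m) := by
    have := hBlim.div hAlim one_ne_zero
    rw [div_one] at this
    exact this
  apply hfinal.congr'
  filter_upwards [eventually_ge_atTop 1] with N hN
  have hNpos : (0:ℝ) ≠ (N:ℝ) := by
    have : (0:ℝ) < N := by exact_mod_cast hN
    exact this.ne
  rw [div_div_div_cancel_right₀ (Ne.symm hNpos)]
end

section
/- Let α be irrational, f(θ) = θ + α mod 1 the circle rotation, g(θ) = e^{2πikθ} for a fixed nonzero integer k, and let w ∈ C¹([0,1]) with w(0) = w(1) = 0 and ∫₀¹ w = 1. Then the weighted Birkhoff average WB_N(g)(θ₀) converges to 0 = ∫₀¹ g(θ) dθ for every initial point θ₀, with |WB_N(g)(θ₀)| ≤ C/α_N for a constant C depending only on k, α, and the total variation of w, where α_N = ∑_{n=0}^{N-1} w(n/N). -/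
open Filter Complex

/-- For an irrational rotation and the character `g(θ) = e^{2πikθ}` with `k ≠ 0`,
the weighted Birkhoff averages with a `C¹` taper vanishing at the endpoints converge
to `0 = ∫₀¹ g` for every initial point, with an `O(1/α_N)` bound. -/
theorem weighted_birkhoff_irrational_rotation
    (α : ℝ) (hα : Irrational α) (k : ℤ) (hk : k ≠ 0)
    (w : ℝ → ℝ) (hw : ContDiff ℝ 1 w) (h0 : w 0 = 0) (h1 : w 1 = 0)
    (hint : ∫ t in (0:ℝ)..1, w t = 1) :
    ∃ C : ℝ, 0 < C ∧ ∀ θ₀ : ℝ,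
      (Tendsto
        (fun N : ℕ =>
          (∑ n ∈ Finset.range N,
              (w (n / N) : ℂ) * Complex.exp (2 * Real.pi * Complex.I * k * (θ₀ + n * α))) /
            (∑ n ∈ Finset.range N, w (n / N) : ℝ))
        atTop (nhds 0)) ∧
      ∀ N : ℕ, 0 < (∑ n ∈ Finset.range N, w (n / N)) →
        ‖(∑ n ∈ Finset.range N,
              (w (n / N) : ℂ) * Complex.exp (2 * Real.pi * Complex.I * k * (θ₀ + n * α))) /
            (∑ n ∈ Finset.range N, w (n / N) : ℝ)‖ ≤
          C / (∑ n ∈ Finset.range N, w (n / N)) := by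
  have hcont : Continuous w := hw.continuous
  -- Lipschitz bound on [0,1]
  obtain ⟨M, hM⟩ := (isCompact_Icc (a := (0:ℝ)) (b := 1)).exists_bound_of_continuousOn
    (hw.continuous_deriv le_rfl).continuousOn
  have hM0 : 0 ≤ M := le_trans (norm_nonneg _) (hM 0 ⟨le_rfl, zero_le_one⟩)
  have hdiff : ∀ x ∈ Set.Icc (0:ℝ) 1, DifferentiableAt ℝ w x :=
    fun x _ => (hw.differentiable one_ne_zero).differentiableAt
  have hlip : ∀ x ∈ Set.Icc (0:ℝ) 1, ∀ y ∈ Set.Icc (0:ℝ) 1, |w y - w x| ≤ M * |y - x| := by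
    intro x hx y hy
    simpa [Real.norm_eq_abs] using
      (convex_Icc (0:ℝ) 1).norm_image_sub_le_of_norm_deriv_le hdiff hM hx hy
  set c : ℂ := 2 * Real.pi * Complex.I * k with hc
  set z : ℂ := Complex.exp (c * α) with hzdef
  have hk' : (k : ℝ) ≠ 0 := Int.cast_ne_zero.mpr hk
  have hz_ne : z ≠ 1 := by
    intro h
    rw [hzdef, Complex.exp_eq_one_iff] at h
    obtain ⟨n, hn⟩ := h
    have h2πI : (2 * (Real.pi : ℂ) * Complex.I) ≠ 0 := by
      simp [Real.pi_ne_zero, Complex.I_ne_zero]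
    have h2 : (k : ℂ) * α = n := by
      apply mul_left_cancel₀ h2πI
      rw [show (2 * (Real.pi : ℂ) * Complex.I) * ((k:ℂ) * α) = c * α by rw [hc]; ring, hn]
      ring
    have h3 : (k : ℝ) * α = n := by
      have : ((k * α : ℝ) : ℂ) = ((n : ℝ) : ℂ) := by push_cast; exact_mod_cast h2
      exact_mod_cast this
    apply hα
    refine ⟨(n : ℚ) / (k : ℚ), ?_⟩
    have hkq : (k : ℚ) ≠ 0 := Int.cast_ne_zero.mpr hk
    push_cast
    field_simp
    linarith [h3]
  have hz_norm : ‖z‖ = 1 := by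
    rw [hzdef, show c * α = ((2 * Real.pi * k * α : ℝ) : ℂ) * Complex.I by rw [hc]; push_cast; ring]
    exact Complex.norm_exp_ofReal_mul_I _
  have hz1pos : 0 < ‖z - 1‖ := by
    rw [norm_pos_iff, sub_ne_zero]; exact hz_ne
  set Cg : ℝ := 2 / ‖z - 1‖ with hCgdef
  have hCg0 : 0 ≤ Cg := div_nonneg (by norm_num) (norm_nonneg _)
  have hgeom : ∀ m : ℕ, ‖∑ j ∈ Finset.range m, z ^ j‖ ≤ Cg := by
    intro m
    rw [geom_sum_eq hz_ne, norm_div, hCgdef]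
    have h2 : ‖z ^ m - 1‖ ≤ 2 := by
      calc ‖z ^ m - 1‖ ≤ ‖z ^ m‖ + ‖(1:ℂ)‖ := norm_sub_le _ _
        _ = 2 := by rw [norm_pow, hz_norm, one_pow, norm_one]; norm_num
    gcongr
  -- uniform bound on the tapered geometric sums
  have hnum : ∀ N : ℕ, ‖∑ n ∈ Finset.range N, (w (n / N) : ℂ) * z ^ n‖ ≤ 2 * M * Cg := by
    intro N
    rcases Nat.eq_zero_or_pos N with hN | hN
    · simp [hN]; positivity
    have hNR : (0:ℝ) < N := by exact_mod_cast hN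
    have hmem : ∀ n : ℕ, n ≤ N → ((n : ℝ) / N) ∈ Set.Icc (0:ℝ) 1 := by
      intro n hn
      constructor
      · positivity
      · rw [div_le_one hNR]; exact_mod_cast hn
    have hpart := Finset.sum_range_by_parts (fun n => ((w (n / N) : ℝ) : ℂ))
      (fun n => z ^ n) N
    simp only [smul_eq_mul] at hpart
    rw [hpart]
    have hb1 : ‖((w ((N - 1 : ℕ) / N) : ℝ) : ℂ)‖ ≤ M := by
      rw [Complex.norm_real, Real.norm_eq_abs]
      have hx : (((N - 1 : ℕ) : ℝ) / N) ∈ Set.Icc (0:ℝ) 1 := hmem _ (Nat.sub_le _ _)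
      calc |w (((N - 1 : ℕ) : ℝ) / N)| = |w (((N - 1 : ℕ) : ℝ) / N) - w 1| := by rw [h1, sub_zero]
        _ ≤ M * |(((N - 1 : ℕ) : ℝ) / N) - 1| := by
            simpa using hlip 1 ⟨zero_le_one, le_rfl⟩ _ hx
        _ ≤ M * 1 := by
            apply mul_le_mul_of_nonneg_left ?_ hM0
            rw [abs_le]
            constructor <;> linarith [hx.1, hx.2]
        _ = M := mul_one M
    have hb2 : ∀ i : ℕ, i < N - 1 →
        ‖((w ((i + 1 : ℕ) / N) : ℝ) : ℂ) - ((w ((i : ℕ) / N) : ℝ) : ℂ)‖ ≤ M / N := by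
      intro i hi
      rw [← Complex.ofReal_sub, Complex.norm_real, Real.norm_eq_abs]
      have hx : ((i : ℝ) / N) ∈ Set.Icc (0:ℝ) 1 := hmem _ (by omega)
      have hy : (((i + 1 : ℕ) : ℝ) / N) ∈ Set.Icc (0:ℝ) 1 := hmem _ (by omega)
      calc |w (((i + 1 : ℕ) : ℝ) / N) - w ((i:ℝ) / N)|
          ≤ M * |(((i + 1 : ℕ) : ℝ) / N) - (i:ℝ) / N| := hlip _ hx _ hy
        _ = M / N := by
            push_cast
            rw [div_sub_div_same, show ((i:ℝ) + 1 - i) = 1 by ring, abs_of_pos (by positivity)]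
            ring
    calc ‖((w ((N - 1 : ℕ) / N) : ℝ) : ℂ) * ∑ i ∈ Finset.range N, z ^ i -
          ∑ i ∈ Finset.range (N - 1),
            (((w ((i + 1 : ℕ) / N) : ℝ) : ℂ) - ((w ((i : ℕ) / N) : ℝ) : ℂ)) *
              ∑ j ∈ Finset.range (i + 1), z ^ j‖
        ≤ ‖((w ((N - 1 : ℕ) / N) : ℝ) : ℂ) * ∑ i ∈ Finset.range N, z ^ i‖ +
          ‖∑ i ∈ Finset.range (N - 1),
            (((w ((i + 1 : ℕ) / N) : ℝ) : ℂ) - ((w ((i : ℕ) / N) : ℝ) : ℂ)) *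
              ∑ j ∈ Finset.range (i + 1), z ^ j‖ := norm_sub_le _ _
      _ ≤ M * Cg + (N - 1 : ℕ) * ((M / N) * Cg) := by
          apply add_le_add
          · rw [norm_mul]
            exact mul_le_mul hb1 (hgeom N) (norm_nonneg _) hM0
          · refine (norm_sum_le _ _).trans ?_
            calc ∑ i ∈ Finset.range (N - 1),
                  ‖(((w ((i + 1 : ℕ) / N) : ℝ) : ℂ) - ((w ((i : ℕ) / N) : ℝ) : ℂ)) *
                    ∑ j ∈ Finset.range (i + 1), z ^ j‖
                ≤ ∑ _i ∈ Finset.range (N - 1), (M / N) * Cg := by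
                  apply Finset.sum_le_sum
                  intro i hi
                  rw [norm_mul]
                  exact mul_le_mul (hb2 i (Finset.mem_range.mp hi)) (hgeom (i+1))
                    (norm_nonneg _) (by positivity)
              _ = (N - 1 : ℕ) * ((M / N) * Cg) := by
                  rw [Finset.sum_const, Finset.card_range, nsmul_eq_mul]
      _ ≤ M * Cg + M * Cg := by
          apply add_le_add (le_refl _)
          have h1' : ((N - 1 : ℕ) : ℝ) ≤ N := by exact_mod_cast Nat.sub_le N 1
          calc ((N - 1 : ℕ) : ℝ) * ((M / N) * Cg) ≤ (N : ℝ) * ((M / N) * Cg) := by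
                apply mul_le_mul_of_nonneg_right h1' (by positivity)
            _ = M * Cg := by field_simp
      _ = 2 * M * Cg := by ring
  -- lower bound for the weights sum
  have hden_lb : ∀ N : ℕ, (N : ℝ) - M ≤ ∑ n ∈ Finset.range N, w (n / N) := by
    intro N
    rcases Nat.eq_zero_or_pos N with hN | hN
    · simp [hN, hM0]
    have hNR : (0:ℝ) < N := by exact_mod_cast hN
    have hsplit : (1 : ℝ) = ∑ n ∈ Finset.range N, ∫ t in ((n:ℝ)/N)..(((n:ℝ)+1)/N), w t := by
      have hs := intervalIntegral.sum_integral_adjacent_intervals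
        (a := fun n : ℕ => (n:ℝ)/N) (μ := MeasureTheory.volume) (f := w) (n := N)
        (fun i _ => hcont.intervalIntegrable _ _)
      push_cast at hs
      rw [hs]
      simp only [Nat.cast_zero, zero_div]
      rw [div_self hNR.ne']
      exact hint.symm
    have key : |(N:ℝ) - ∑ n ∈ Finset.range N, w (n / N)| ≤ M := by
      have : (N:ℝ) - ∑ n ∈ Finset.range N, w (n / N)
          = ∑ n ∈ Finset.range N,
              ((N:ℝ) * ∫ t in ((n:ℝ)/N)..(((n:ℝ)+1)/N), w t) - ∑ n ∈ Finset.range N, w (n / N) := by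
        rw [← Finset.mul_sum, ← hsplit, mul_one]
      rw [this, ← Finset.sum_sub_distrib]
      refine (Finset.abs_sum_le_sum_abs _ _).trans ?_
      have hterm : ∀ n ∈ Finset.range N,
          |((N:ℝ) * ∫ t in ((n:ℝ)/N)..(((n:ℝ)+1)/N), w t) - w (n / N)| ≤ M / N := by
        intro n hn
        have hnN : n < N := Finset.mem_range.mp hn
        set a : ℝ := (n:ℝ)/N with ha
        set b : ℝ := ((n:ℝ)+1)/N with hb
        have hab : b - a = 1 / N := by rw [ha, hb]; field_simp; ring
        have haIcc : a ∈ Set.Icc (0:ℝ) 1 := by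
          constructor
          · positivity
          · rw [ha, div_le_one hNR]; exact_mod_cast hnN.le
        have hbIcc : b ∈ Set.Icc (0:ℝ) 1 := by
          constructor
          · positivity
          · rw [hb, div_le_one hNR]
            push_cast
            exact_mod_cast Nat.succ_le_of_lt hnN
        have hInt : ∫ t in a..b, (w t - w a) = (∫ t in a..b, w t) - w a * (1/N) := by
          rw [intervalIntegral.integral_sub (hcont.intervalIntegrable _ _)
            (intervalIntegrable_const), intervalIntegral.integral_const, hab, smul_eq_mul]
          ring
        have hIbnd : ‖∫ t in a..b, (w t - w a)‖ ≤ (M / N) * |b - a| := by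
          apply intervalIntegral.norm_integral_le_of_norm_le_const
          intro x hx
          have hle : a ≤ b := by rw [ha, hb]; gcongr; linarith
          rw [Set.uIoc_of_le hle] at hx
          have hxIcc : x ∈ Set.Icc (0:ℝ) 1 :=
            ⟨le_trans haIcc.1 hx.1.le, le_trans hx.2 hbIcc.2⟩
          refine (hlip a haIcc x hxIcc).trans ?_
          rw [show M / N = M * (1/N) by ring]
          apply mul_le_mul_of_nonneg_left ?_ hM0
          rw [_root_.abs_of_nonneg (by linarith [hx.1]), ← hab]
          linarith [hx.2]
        have heq : (N:ℝ) * (∫ t in a..b, w t) - w (n / N)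
            = (N:ℝ) * ∫ t in a..b, (w t - w a) := by
          rw [hInt, ha]
          field_simp
        rw [heq, abs_mul, abs_of_pos hNR]
        calc (N:ℝ) * |∫ t in a..b, (w t - w a)|
            ≤ (N:ℝ) * ((M / N) * |b - a|) := by
              apply mul_le_mul_of_nonneg_left ?_ hNR.le
              simpa [Real.norm_eq_abs] using hIbnd
          _ = M / N := by
              rw [hab, _root_.abs_of_pos (by positivity)]
              field_simp
      calc ∑ n ∈ Finset.range N,
            |((N:ℝ) * ∫ t in ((n:ℝ)/N)..(((n:ℝ)+1)/N), w t) - w (n / N)|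
          ≤ ∑ _n ∈ Finset.range N, M / N := Finset.sum_le_sum hterm
        _ = M := by
            rw [Finset.sum_const, Finset.card_range, nsmul_eq_mul]
            field_simp
    linarith [abs_le.mp key |>.1, abs_le.mp key |>.2]
  have hden_top : Tendsto (fun N : ℕ => ∑ n ∈ Finset.range N, w (n / N)) atTop atTop := by
    apply tendsto_atTop_mono hden_lb
    simpa [sub_eq_add_neg] using
      tendsto_atTop_add_const_right atTop (-M) tendsto_natCast_atTop_atTop
  -- assemble
  refine ⟨2 * M * Cg + 1, by positivity, fun θ₀ => ?_⟩
  have hnumeq : ∀ N : ℕ,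
      (∑ n ∈ Finset.range N,
        (w (n / N) : ℂ) * Complex.exp (2 * Real.pi * Complex.I * k * (θ₀ + n * α)))
      = Complex.exp (c * θ₀) * ∑ n ∈ Finset.range N, (w (n / N) : ℂ) * z ^ n := by
    intro N
    rw [Finset.mul_sum]
    refine Finset.sum_congr rfl fun n _ => ?_
    rw [show (2 * (Real.pi:ℂ) * Complex.I * k * (θ₀ + n * α)) = c * θ₀ + n * (c * α) by
      rw [hc]; push_cast; ring, Complex.exp_add, Complex.exp_nat_mul, ← hzdef]
    ring
  have hexp_norm : ‖Complex.exp (c * θ₀)‖ = 1 := by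
    rw [show c * θ₀ = ((2 * Real.pi * k * θ₀ : ℝ) : ℂ) * Complex.I by rw [hc]; push_cast; ring]
    exact Complex.norm_exp_ofReal_mul_I _
  have hnum' : ∀ N : ℕ,
      ‖∑ n ∈ Finset.range N,
        (w (n / N) : ℂ) * Complex.exp (2 * Real.pi * Complex.I * k * (θ₀ + n * α))‖
        ≤ 2 * M * Cg + 1 := by
    intro N
    rw [hnumeq N, norm_mul, hexp_norm, one_mul]
    linarith [hnum N]
  have hbound : ∀ N : ℕ, 0 < (∑ n ∈ Finset.range N, w (n / N)) →
      ‖(∑ n ∈ Finset.range N,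
          (w (n / N) : ℂ) * Complex.exp (2 * Real.pi * Complex.I * k * (θ₀ + n * α))) /
        (∑ n ∈ Finset.range N, w (n / N) : ℝ)‖ ≤
        (2 * M * Cg + 1) / (∑ n ∈ Finset.range N, w (n / N)) := by
    intro N hd
    rw [norm_div, Complex.norm_real, Real.norm_eq_abs, abs_of_pos hd]
    exact (div_le_div_iff_of_pos_right hd).mpr (hnum' N)
  refine ⟨?_, hbound⟩
  apply squeeze_zero_norm'
  · filter_upwards [hden_top.eventually_gt_atTop 0] with N hd using hbound N hd
  · exact tendsto_const_nhds.div_atTop hden_top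
end
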